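/- Let A' ⊆ A, let S be a semi-matching of A' into B admitting no length-2 degree-minimizing path, and let S* be an optimal semi-matching of A' into B with maximal degree d*. Then there exists A'' ⊆ A' with |A''| ≥ |A'|/2 such that (1) the restriction of S to A'' × B has maximal degree at most d*, and (2) the restriction of S to (A' \ A'') × B is a semi-matching of A' \ A'' into B admitting no length-2 degree-minimizing path. -/

import Mathlib

open Finset

variable {α β : Type*} [Fintype α] [Fintype β] [DecidableEq α] [DecidableEq β]

/-- Degree of a vertex `b ∈ B` with respect to an edge set `S`. -/
def degB (S : Finset (α × β)) (b : β) : ℕ := (S.filter fun e => e.2 = b).card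

/-- Degree of a vertex `a ∈ A` with respect to an edge set `S`. -/
def degA (S : Finset (α × β)) (a : α) : ℕ := (S.filter fun e => e.1 = a).card

/-- Maximal degree of a vertex with respect to an edge set `S`. -/
def maxDeg (S : Finset (α × β)) : ℕ :=
  max (Finset.univ.sup (degA S)) (Finset.univ.sup (degB S))

/-- `S` is a semi-matching of `A'` into `B` using edges of `E`. -/
def IsSemi (A' : Finset α) (E S : Finset (α × β)) : Prop :=
  S ⊆ E ∧ (∀ e ∈ S, e.1 ∈ A') ∧ ∀ a ∈ A', degA S a = 1

/-- An optimal semi-matching of `A'` into `B` using edges of `E`: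
a semi-matching minimizing the maximal degree. -/
def IsOptSemi (A' : Finset α) (E S : Finset (α × β)) : Prop :=
  IsSemi A' E S ∧ ∀ T, IsSemi A' E T → maxDeg S ≤ maxDeg T

/-- Neighborhood of a set `X ⊆ A` of vertices with respect to an edge set `E`. -/
def nbr (E : Finset (α × β)) (X : Finset α) : Finset β :=
  Finset.univ.filter fun b => ∃ a ∈ X, (a, b) ∈ E

/-- A degree-minimizing path `(b 0, a 0, b 1, a 1, …, b k)` with respect to a
semi-matching `S` in the graph with edge set `E`: each `a i` is matched to `b i` in `S`,
each `(a i, b (i+1))` is a non-matching edge of `E`, the `S`-degrees of the `b i` are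
non-increasing along the path, and the total degree drop is at least `2`. -/
def IsDegMinPath (E S : Finset (α × β)) {k : ℕ} (a : Fin k → α) (b : Fin (k + 1) → β) :
    Prop :=
  0 < k ∧ Function.Injective a ∧ Function.Injective b ∧
  (∀ i : Fin k, (a i, b i.castSucc) ∈ S) ∧
  (∀ i : Fin k, (a i, b i.succ) ∈ E ∧ (a i, b i.succ) ∉ S) ∧
  (∀ i : Fin k, degB S (b i.succ) ≤ degB S (b i.castSucc)) ∧
  degB S (b (Fin.last k)) + 2 ≤ degB S (b 0)

/-- `S` admits no degree-minimizing path (of any length) in `E`. -/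
def NoDegMinPath (E S : Finset (α × β)) : Prop :=
  ∀ (k : ℕ) (a : Fin k → α) (b : Fin (k + 1) → β), ¬ IsDegMinPath E S a b

/-- `S` admits no length-2 degree-minimizing path `(b', a, b)` in `E`, i.e. there is no
`a` matched in `S` to `b'` with a non-matching edge `(a, b) ∈ E` and
`deg_S(b') > deg_S(b) + 1`. -/
def NoLen2DegMinPath (E S : Finset (α × β)) : Prop :=
  ¬ ∃ (a : α) (b b' : β), (a, b') ∈ S ∧ (a, b) ∈ E ∧ (a, b) ∉ S ∧
      degB S b + 1 < degB S b'

/-- Halving lemma: if `S` is a semi-matching of `A'` into `B` with no length-2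
degree-minimizing path and `S*` is an optimal semi-matching of `A'` with maximal degree
`d*`, then some `A'' ⊆ A'` with `|A''| ≥ |A'|/2` satisfies: the restriction of `S` to
`A'' × B` has maximal degree at most `d*`, and the restriction of `S` to `(A' \ A'') × B`
is a semi-matching of `A' \ A''` with no length-2 degree-minimizing path. -/
theorem semi_halving_lemma (E S Sstar : Finset (α × β)) (A' : Finset α)
    (hS : IsSemi A' E S) (hno : NoLen2DegMinPath E S)
    (hSstar : IsOptSemi A' E Sstar) :
    ∃ A'' ⊆ A', A'.card ≤ 2 * A''.card ∧
      maxDeg (S.filter fun e => e.1 ∈ A'') ≤ maxDeg Sstar ∧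
      IsSemi (A' \ A'') E (S.filter fun e => e.1 ∈ A' \ A'') ∧
      NoLen2DegMinPath (E.filter fun e => e.1 ∈ A' \ A'')
        (S.filter fun e => e.1 ∈ A' \ A'') := by

  classical
  obtain ⟨hSE, hSA, hSdeg⟩ := hS
  obtain ⟨⟨hTE, hTA, hTdeg⟩, -⟩ := hSstar
  set d := maxDeg Sstar with hd
  -- each vertex of A' has a unique S-edge
  have hpart : ∀ e₁ ∈ S, ∀ e₂ ∈ S, e₁.1 = e₂.1 → e₁ = e₂ := by
    intro e₁ h₁ e₂ h₂ h12
    have hc : (S.filter fun e => e.1 = e₁.1).card = 1 := hSdeg e₁.1 (hSA e₁ h₁)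
    rw [Finset.card_eq_one] at hc
    obtain ⟨e, he⟩ := hc
    have h1' : e₁ ∈ S.filter fun e => e.1 = e₁.1 := mem_filter.2 ⟨h₁, rfl⟩
    have h2' : e₂ ∈ S.filter fun e => e.1 = e₁.1 := mem_filter.2 ⟨h₂, h12.symm⟩
    rw [he, mem_singleton] at h1' h2'
    rw [h1', h2']
  have hinj : Set.InjOn Prod.fst (↑S : Set (α × β)) := fun e₁ h₁ e₂ h₂ h =>
    hpart e₁ h₁ e₂ h₂ h
  have hbb : ∀ a b b', (a, b) ∈ S → (a, b') ∈ S → b = b' := by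
    intro a b b' h h'
    have := hpart (a, b) h (a, b') h' rfl
    exact congrArg Prod.snd this
  -- degree bound for Sstar
  have hdstar : ∀ b, degB Sstar b ≤ d := fun b =>
    le_trans (Finset.le_sup (f := degB Sstar) (mem_univ b)) (le_max_right _ _)
  -- vertices matched to b
  set Ab : β → Finset α := fun b => (S.filter fun e => e.2 = b).image Prod.fst with hAb
  have hAbmem : ∀ a b, a ∈ Ab b ↔ (a, b) ∈ S := by
    intro a b
    simp only [hAb, mem_image, mem_filter]
    constructor
    · rintro ⟨⟨x, y⟩, ⟨hxy, hy⟩, hx⟩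
      dsimp at hx hy
      rw [← hx, ← hy]; exact hxy
    · intro h; exact ⟨(a, b), ⟨h, rfl⟩, rfl⟩
  have hAbcard : ∀ b, (Ab b).card = degB S b := by
    intro b
    exact Finset.card_image_of_injOn
      (hinj.mono (Finset.coe_subset.2 (filter_subset _ _)))
  have hAbA' : ∀ b, Ab b ⊆ A' := by
    intro b a ha
    exact hSA _ ((hAbmem a b).1 ha)
  -- choose d vertices to keep at each b
  have hkeep : ∀ b, ∃ t, t ⊆ Ab b ∧ t.card = min (degB S b) d := by
    intro b
    obtain ⟨t, ht, hc⟩ := Finset.exists_subset_card_eq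
      (s := Ab b) (n := min (degB S b) d) (by rw [hAbcard]; exact min_le_left _ _)
    exact ⟨t, ht, hc⟩
  choose keep hksub hkcard using hkeep
  set A2 : Finset α := Finset.univ.biUnion keep with hA2
  have hkS : ∀ b, ∀ a ∈ keep b, (a, b) ∈ S := fun b a ha => (hAbmem a b).1 (hksub b ha)
  have hA2sub : A2 ⊆ A' := by
    intro a ha
    rw [hA2, mem_biUnion] at ha
    obtain ⟨b, -, hb⟩ := ha
    exact hSA _ (hkS b a hb)
  have hmem2 : ∀ a b, (a, b) ∈ S → (a ∈ A2 ↔ a ∈ keep b) := by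
    intro a b hab
    constructor
    · intro h
      rw [hA2, mem_biUnion] at h
      obtain ⟨b', -, hb'⟩ := h
      have := hbb a b' b (hkS b' a hb') hab
      rwa [this] at hb'
    · intro h; exact mem_biUnion.2 ⟨b, mem_univ b, h⟩
  have hinterK : ∀ b, Ab b ∩ A2 = keep b := by
    intro b
    ext a
    simp only [mem_inter, hAbmem]
    constructor
    · rintro ⟨hab, ha2⟩; exact (hmem2 a b hab).1 ha2
    · intro h; exact ⟨hkS b a h, mem_biUnion.2 ⟨b, mem_univ b, h⟩⟩
  -- degrees of filtered edge sets
  have hdegBfil : ∀ (T : Finset α) (b : β),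
      degB (S.filter fun e => e.1 ∈ T) b = (Ab b ∩ T).card := by
    intro T b
    have himg : Ab b ∩ T = (S.filter fun e => e.1 ∈ T ∧ e.2 = b).image Prod.fst := by
      ext a
      simp only [mem_inter, hAbmem, mem_image, mem_filter]
      constructor
      · rintro ⟨hab, haT⟩; exact ⟨(a, b), ⟨hab, haT, rfl⟩, rfl⟩
      · rintro ⟨⟨x, y⟩, ⟨hxy, hxT, hy⟩, hx⟩
        dsimp at hx hy hxT
        subst hx; subst hy
        exact ⟨hxy, hxT⟩
    rw [degB, filter_filter, himg,
      Finset.card_image_of_injOn (hinj.mono (Finset.coe_subset.2 (filter_subset _ _)))]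
  have hfib : ∀ (U : Finset (α × β)), U.card = ∑ b ∈ Finset.univ, degB U b := by
    intro U
    exact Finset.card_eq_sum_card_fiberwise (f := Prod.snd) (fun e _ => mem_univ e.2)
  have hcardT : ∀ T : Finset α, T ⊆ A' → (S.filter fun e => e.1 ∈ T).card = T.card := by
    intro T hT
    have himg : (S.filter fun e => e.1 ∈ T).image Prod.fst = T := by
      ext a
      simp only [mem_image, mem_filter]
      constructor
      · rintro ⟨e, ⟨-, heT⟩, hea⟩; exact hea ▸ heT
      · intro haT
        have hc : (S.filter fun e => e.1 = a).card = 1 := hSdeg a (hT haT)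
        have hne : (S.filter fun e => e.1 = a).Nonempty :=
          Finset.card_pos.1 (by rw [hc]; exact one_pos)
        obtain ⟨e, he⟩ := hne
        rw [mem_filter] at he
        exact ⟨e, ⟨he.1, by rw [he.2]; exact haT⟩, he.2⟩
    have hci := Finset.card_image_of_injOn (f := Prod.fst)
      (s := S.filter fun e => e.1 ∈ T)
      (hinj.mono (Finset.coe_subset.2 (filter_subset _ _)))
    rw [himg] at hci
    exact hci.symm
  -- per-b degrees of the two restrictions
  have hdeg2 : ∀ b, degB (S.filter fun e => e.1 ∈ A2) b = min (degB S b) d := by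
    intro b
    rw [hdegBfil, hinterK, hkcard]
  have hinterR : ∀ b, Ab b ∩ (A' \ A2) = Ab b \ keep b := by
    intro b
    ext a
    simp only [mem_inter, mem_sdiff]
    constructor
    · rintro ⟨hab, -, ha2⟩
      exact ⟨hab, fun hk => ha2 ((hmem2 a b ((hAbmem a b).1 hab)).2 hk)⟩
    · rintro ⟨hab, hk⟩
      exact ⟨hab, hAbA' b hab, fun h2 => hk ((hmem2 a b ((hAbmem a b).1 hab)).1 h2)⟩
  have hdegR : ∀ b, degB (S.filter fun e => e.1 ∈ A' \ A2) b
      = degB S b - min (degB S b) d := by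
    intro b
    rw [hdegBfil, hinterR, Finset.card_sdiff_of_subset (hksub b), hAbcard, hkcard]
  -- the key counting inequality
  set H : Finset β := Finset.univ.filter (fun b => d < degB S b) with hH
  set M : Finset β := Finset.univ.filter (fun b => degB S b = d) with hM
  set N : Finset β := Finset.univ.filter (fun b => d ≤ degB S b) with hN
  have hNHM : N.card = H.card + M.card := by
    have hun : N = H ∪ M := by
      ext b
      simp only [hN, hH, hM, mem_filter, mem_union, mem_univ, true_and]
      omega
    have hdis : Disjoint H M := by
      rw [Finset.disjoint_left]
      intro b hb hb'
      simp only [hH, hM, mem_filter, mem_univ, true_and] at hb hb'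
      omega
    rw [hun, Finset.card_union_of_disjoint hdis]
  -- choose S*-partners
  have hq' : ∀ a ∈ A', ∃ e ∈ Sstar, e.1 = a := by
    intro a ha
    have hc : (Sstar.filter fun e => e.1 = a).card = 1 := hTdeg a ha
    have hne : (Sstar.filter fun e => e.1 = a).Nonempty :=
      Finset.card_pos.1 (by rw [hc]; exact one_pos)
    obtain ⟨e, he⟩ := hne
    rw [mem_filter] at he
    exact ⟨e, he.1, he.2⟩
  choose q hq1 hq2 using hq'
  -- heavy edges of S inject into Sstar edges at S-degree ≥ d vertices
  have hSHcard : (S.filter fun e => d < degB S e.2).card = ∑ b ∈ H, degB S b := by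
    have h1 : (S.filter fun e => d < degB S e.2).card
        = ∑ b ∈ H, ((S.filter fun e => d < degB S e.2).filter fun e => e.2 = b).card :=
      Finset.card_eq_sum_card_fiberwise (f := Prod.snd)
        (fun e he => by
          simp only [hH, coe_filter, mem_filter, mem_univ, true_and, Set.mem_setOf_eq]
          exact (mem_filter.1 he).2)
    rw [h1]
    refine Finset.sum_congr rfl (fun b hb => ?_)
    simp only [hH, mem_filter, mem_univ, true_and] at hb
    rw [filter_filter, degB]
    congr 1
    apply Finset.filter_congr
    intro e _
    constructor
    · rintro ⟨-, h⟩; exact h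
    · intro h; exact ⟨by rw [h]; exact hb, h⟩
  have hinject : (S.filter fun e => d < degB S e.2).card
      ≤ (Sstar.filter fun e => d ≤ degB S e.2).card := by
    set f : α × β → α × β := fun e => if h : e.1 ∈ A' then q e.1 h else e with hf
    apply Finset.card_le_card_of_injOn f
    · intro e he
      rw [mem_coe, mem_filter] at he
      obtain ⟨heS, hdeg⟩ := he
      have haA : e.1 ∈ A' := hSA e heS
      have hfe : f e = q e.1 haA := by rw [hf]; simp [haA]
      have hqS : q e.1 haA ∈ Sstar := hq1 e.1 haA
      have heS' : (e.1, e.2) ∈ S := by rwa [Prod.mk.eta]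
      rw [hfe, mem_coe, mem_filter]
      refine ⟨hqS, ?_⟩
      by_cases hqmem : q e.1 haA ∈ S
      · have := hpart _ hqmem e heS (hq2 e.1 haA)
        rw [this]
        exact le_of_lt hdeg
      · by_contra hcon
        push_neg at hcon
        have hqe : (e.1, (q e.1 haA).2) = q e.1 haA :=
          Prod.ext_iff.2 ⟨(hq2 e.1 haA).symm, rfl⟩
        refine hno ⟨e.1, (q e.1 haA).2, e.2, heS', ?_, ?_, ?_⟩
        · rw [hqe]; exact hTE hqS
        · rw [hqe]; exact hqmem
        · omega
    · intro e1 h1 e2 h2 hfe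
      simp only [Finset.coe_filter, Set.mem_setOf_eq] at h1 h2
      have ha1 : e1.1 ∈ A' := hSA e1 h1.1
      have ha2 : e2.1 ∈ A' := hSA e2 h2.1
      have hfe1 : f e1 = q e1.1 ha1 := by rw [hf]; simp [ha1]
      have hfe2 : f e2 = q e2.1 ha2 := by rw [hf]; simp [ha2]
      have : e1.1 = e2.1 := by
        rw [← hq2 e1.1 ha1, ← hq2 e2.1 ha2, ← hfe1, ← hfe2, hfe]
      exact hpart e1 h1.1 e2 h2.1 this
  have hstarcard : (Sstar.filter fun e => d ≤ degB S e.2).card ≤ d * N.card := by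
    have h1 : (Sstar.filter fun e => d ≤ degB S e.2).card
        = ∑ b ∈ N, ((Sstar.filter fun e => d ≤ degB S e.2).filter fun e => e.2 = b).card :=
      Finset.card_eq_sum_card_fiberwise (f := Prod.snd)
        (fun e he => by
          simp only [hN, coe_filter, mem_filter, mem_univ, true_and, Set.mem_setOf_eq]
          exact (mem_filter.1 he).2)
    rw [h1]
    calc ∑ b ∈ N, ((Sstar.filter fun e => d ≤ degB S e.2).filter fun e => e.2 = b).card
        ≤ ∑ _b ∈ N, d := by
          refine Finset.sum_le_sum (fun b _ => ?_)
          refine le_trans (Finset.card_le_card ?_) (hdstar b)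
          intro e he
          rw [filter_filter, mem_filter] at he
          exact mem_filter.2 ⟨he.1, he.2.2⟩
      _ = d * N.card := by rw [Finset.sum_const, smul_eq_mul, mul_comm]
  have hHsum : ∑ b ∈ H, (degB S b - d) + d * H.card = ∑ b ∈ H, degB S b := by
    have : ∀ b ∈ H, degB S b - d + d = degB S b := by
      intro b hb
      simp only [hH, mem_filter, mem_univ, true_and] at hb
      omega
    calc ∑ b ∈ H, (degB S b - d) + d * H.card
        = ∑ b ∈ H, (degB S b - d + d) := by
          rw [Finset.sum_add_distrib, Finset.sum_const, smul_eq_mul, mul_comm]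
      _ = ∑ b ∈ H, degB S b := Finset.sum_congr rfl this
  have hkey1 : ∑ b ∈ H, (degB S b - d) ≤ d * M.card := by
    have h2 : ∑ b ∈ H, degB S b ≤ d * H.card + d * M.card := by
      calc ∑ b ∈ H, degB S b = (S.filter fun e => d < degB S e.2).card := hSHcard.symm
        _ ≤ (Sstar.filter fun e => d ≤ degB S e.2).card := hinject
        _ ≤ d * N.card := hstarcard
        _ = d * H.card + d * M.card := by rw [hNHM, mul_add]
    omega
  have hMsum : d * M.card ≤ ∑ b ∈ Finset.univ, min (degB S b) d := by
    have h1 : ∑ b ∈ M, min (degB S b) d = d * M.card := by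
      have hc : ∀ b ∈ M, min (degB S b) d = d := by
        intro b hb
        simp only [hM, mem_filter, mem_univ, true_and] at hb
        rw [hb, min_self]
      rw [Finset.sum_congr rfl hc, Finset.sum_const, smul_eq_mul, mul_comm]
    rw [← h1]
    exact Finset.sum_le_sum_of_subset (Finset.subset_univ M)
  have hkey : ∑ b ∈ Finset.univ, (degB S b - min (degB S b) d)
      ≤ ∑ b ∈ Finset.univ, min (degB S b) d := by
    have hsplit : ∑ b ∈ Finset.univ, (degB S b - min (degB S b) d)
        = ∑ b ∈ H, (degB S b - d) := by
      rw [← Finset.sum_filter_add_sum_filter_not Finset.univ (fun b => d < degB S b)]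
      have hz : ∑ b ∈ Finset.univ.filter (fun b => ¬ d < degB S b),
          (degB S b - min (degB S b) d) = 0 := by
        refine Finset.sum_eq_zero (fun b hb => ?_)
        simp only [mem_filter, mem_univ, true_and] at hb
        omega
      have hh : ∑ b ∈ Finset.univ.filter (fun b => d < degB S b),
          (degB S b - min (degB S b) d) = ∑ b ∈ H, (degB S b - d) := by
        refine Finset.sum_congr rfl (fun b hb => ?_)
        simp only [hH, mem_filter, mem_univ, true_and] at hb
        omega
      rw [hz, hh, add_zero]
    rw [hsplit]
    exact le_trans hkey1 hMsum
  -- cardinalities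
  have hcard2 : A2.card = ∑ b ∈ Finset.univ, min (degB S b) d := by
    rw [← hcardT A2 hA2sub, hfib]
    exact Finset.sum_congr rfl (fun b _ => hdeg2 b)
  have hcardR : (A' \ A2).card
      = ∑ b ∈ Finset.univ, (degB S b - min (degB S b) d) := by
    rw [← hcardT (A' \ A2) (Finset.sdiff_subset), hfib]
    exact Finset.sum_congr rfl (fun b _ => hdegR b)
  refine ⟨A2, hA2sub, ?_, ?_, ?_, ?_⟩
  · -- |A'| ≤ 2 |A2|
    have h1 : (A' \ A2).card + A2.card = A'.card :=
      Finset.card_sdiff_add_card_eq_card hA2sub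
    have h2 : (A' \ A2).card ≤ A2.card := by
      rw [hcardR, hcard2]; exact hkey
    omega
  · -- maxDeg bound
    have hB : Finset.univ.sup (degB (S.filter fun e => e.1 ∈ A2)) ≤ d := by
      refine Finset.sup_le (fun b _ => ?_)
      rw [hdeg2]; exact min_le_right _ _
    have hA : Finset.univ.sup (degA (S.filter fun e => e.1 ∈ A2)) ≤ d := by
      rcases Finset.eq_empty_or_nonempty A2 with h | ⟨a0, ha0⟩
      · refine Finset.sup_le (fun a _ => ?_)
        have : (S.filter fun e => e.1 ∈ A2) = ∅ := by
          rw [Finset.filter_eq_empty_iff]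
          intro e _
          rw [h]
          exact notMem_empty _
        rw [degA, this]
        simp
      · have hd1 : 1 ≤ d := by
          have := hTdeg a0 (hA2sub ha0)
          calc 1 = degA Sstar a0 := this.symm
            _ ≤ Finset.univ.sup (degA Sstar) := Finset.le_sup (mem_univ a0)
            _ ≤ d := le_max_left _ _
        refine Finset.sup_le (fun a _ => le_trans ?_ hd1)
        by_cases ha : a ∈ A'
        · calc degA (S.filter fun e => e.1 ∈ A2) a ≤ degA S a :=
              Finset.card_le_card (Finset.filter_subset_filter _ (filter_subset _ _))
            _ = 1 := hSdeg a ha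
        · have : (S.filter fun e => e.1 ∈ A2).filter (fun e => e.1 = a) = ∅ := by
            rw [Finset.filter_eq_empty_iff]
            rintro e he rfl
            exact ha (hSA e (mem_of_mem_filter e he))
          rw [degA, this]
          simp
    exact max_le hA hB
  · -- remainder is a semi-matching
    refine ⟨le_trans (filter_subset _ _) hSE, fun e he => (mem_filter.1 he).2, ?_⟩
    intro a ha
    have h1 : (S.filter fun e => e.1 ∈ A' \ A2).filter (fun e => e.1 = a)
        = S.filter (fun e => e.1 = a) := by
      rw [filter_filter]
      apply Finset.filter_congr
      intro e _
      constructor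
      · rintro ⟨-, h⟩; exact h
      · intro h; exact ⟨by rw [h]; exact ha, h⟩
    show ((S.filter fun e => e.1 ∈ A' \ A2).filter (fun e => e.1 = a)).card = 1
    rw [h1]
    exact hSdeg a (mem_sdiff.1 ha).1
  · -- no length-2 path in the remainder
    rintro ⟨a, b, b', habS', habE', habnS', hdeg'⟩
    rw [mem_filter] at habS'
    obtain ⟨habS, haR⟩ := habS'
    rw [mem_filter] at habE'
    obtain ⟨habE, -⟩ := habE'
    have habnS : (a, b) ∉ S := by
      intro h
      exact habnS' (mem_filter.2 ⟨h, haR⟩)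
    -- b' is heavy
    have hb'heavy : d < degB S b' := by
      by_contra hle
      push_neg at hle
      have hkeq : keep b' = Ab b' := by
        apply Finset.eq_of_subset_of_card_le (hksub b')
        rw [hAbcard, hkcard]
        omega
      have : a ∈ A2 := (hmem2 a b' habS).2 (by rw [hkeq]; exact (hAbmem a b').2 habS)
      exact (mem_sdiff.1 haR).2 this
    have hchain : degB S b' ≤ degB S b + 1 := by
      by_contra hgt
      push_neg at hgt
      exact hno ⟨a, b, b', habS, habE, habnS, hgt⟩
    have e1 := hdegR b
    have e2 := hdegR b'
    have hminb : min (degB S b) d ≤ d := min_le_right _ _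
    have hminb' : min (degB S b') d = d := min_eq_right (le_of_lt hb'heavy)
    rw [e1, e2, hminb'] at hdeg'
    omega
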